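/- For an MDS code [n, k, d] over GF(q) with d < q and any weight w with d ≤ w ≤ n, the number of codewords of weight w satisfies A_w ≥ C(n, w)(q-d)(q-1)^{w-d} > 0 (Tolhuizen's bound). -/

import Mathlib

open Finset
set_option synthInstance.maxHeartbeats 1000000
set_option maxHeartbeats 1000000
set_option linter.unusedSectionVars false

section aux

variable {F : Type*} [Field F] [Fintype F] [DecidableEq F] {n : ℕ}
variable {C : Submodule F (Fin n → F)} {d : ℕ}

lemma zero_of_small_support (hC : ∀ c ∈ C, c ≠ 0 → d ≤ hammingNorm c)
    {c : Fin n → F} (hc : c ∈ C) (U : Finset (Fin n))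
    (hsupp : ∀ i, i ∉ U → c i = 0) (hU : U.card < d) : c = 0 := by
  by_contra h
  have h1 := hC c hc h
  have h2 : hammingNorm c ≤ U.card := by
    unfold hammingNorm
    apply Finset.card_le_card
    intro i hi
    rw [Finset.mem_filter] at hi
    by_contra hiU
    exact hi.2 (hsupp i hiU)
  omega

lemma agree_eq (hC : ∀ c ∈ C, c ≠ 0 → d ≤ hammingNorm c)
    {T U : Finset (Fin n)} (hUT : U ⊆ T) (hcard : T.card < d + U.card)
    {c c' : Fin n → F} (hc : c ∈ C) (hc' : c' ∈ C)
    (h0 : ∀ i, i ∉ T → c i = 0) (h0' : ∀ i, i ∉ T → c' i = 0)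
    (hag : ∀ i ∈ U, c i = c' i) : c = c' := by
  have hUc := Finset.card_le_card hUT
  have hz : c - c' = 0 := by
    apply zero_of_small_support hC (sub_mem hc hc') (T \ U)
    · intro i hi
      rw [Finset.mem_sdiff] at hi
      push_neg at hi
      by_cases hT : i ∈ T
      · simp [Pi.sub_apply, hag i (hi hT)]
      · simp [Pi.sub_apply, h0 i hT, h0' i hT]
    · rw [Finset.card_sdiff_of_subset hUT]; omega
  exact sub_eq_zero.mp hz

lemma exists_codeword (hC : ∀ c ∈ C, c ≠ 0 → d ≤ hammingNorm c)
    {T S : Finset (Fin n)} (hST : S ⊆ T)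
    (hdim : n + S.card ≤ T.card + Module.finrank F ↥C)
    (hdd : T.card < d + S.card)
    (x : ↥S → F) :
    ∃ c, c ∈ C ∧ (∀ i, i ∉ T → c i = 0) ∧ ∀ i : ↥S, c ↑i = x i := by
  classical
  set ψ : ↥C →ₗ[F] ({i : Fin n // i ∉ T} → F) :=
    (LinearMap.funLeft F F (Subtype.val)).comp C.subtype with hψ
  set K := LinearMap.ker ψ with hK
  have hKmem : ∀ y : ↥C, y ∈ K → ∀ i, i ∉ T → (y : Fin n → F) i = 0 := by
    intro y hy i h
    rw [hK, LinearMap.mem_ker] at hy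
    exact congrFun hy ⟨i, h⟩
  set ρ : ↥K →ₗ[F] (↥S → F) :=
    (LinearMap.funLeft F F (Subtype.val)).comp (C.subtype.comp K.subtype) with hρ
  have hker : LinearMap.ker ρ = ⊥ := by
    rw [Submodule.eq_bot_iff]
    intro y hy
    rw [LinearMap.mem_ker] at hy
    have h0 : ((y : ↥C) : Fin n → F) = 0 := by
      apply zero_of_small_support hC (y : ↥C).2 (T \ S)
      · intro i hi
        rw [Finset.mem_sdiff] at hi; push_neg at hi
        by_cases hiT : i ∈ T
        · exact congrFun hy ⟨i, hi hiT⟩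
        · exact hKmem _ y.2 i hiT
      · rw [Finset.card_sdiff_of_subset hST]
        have := Finset.card_le_card hST; omega
    exact Subtype.ext (Subtype.ext h0)
  have hρinj : Function.Injective ρ := by
    intro a b hab
    have hab' : a - b ∈ LinearMap.ker ρ := by rw [LinearMap.mem_ker, LinearMap.map_sub ρ a b, hab, sub_self]
    rw [hker] at hab'
    exact sub_eq_zero.mp ((Submodule.mem_bot F).mp hab')
  have hcardS : Module.finrank F (↥S → F) = S.card := by
    rw [Module.finrank_fintype_fun_eq_card, Fintype.card_coe]
  have hsurj : Function.Surjective ρ := by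
    rw [← LinearMap.range_eq_top]
    apply Submodule.eq_top_of_finrank_eq
    rw [LinearMap.finrank_range_of_inj hρinj, hcardS]
    have hTn : T.card ≤ n := by simpa using Finset.card_le_univ T
    have h1 := LinearMap.finrank_range_add_finrank_ker ψ
    rw [← hK] at h1
    have h2 : Module.finrank F ↥(LinearMap.range ψ) ≤ n - T.card := by
      have h5 := Submodule.finrank_le (LinearMap.range ψ)
      have h6 : Module.finrank F ({i : Fin n // i ∉ T} → F) = n - T.card := by
        rw [Module.finrank_fintype_fun_eq_card]
        rw [Fintype.card_subtype_compl, Fintype.card_fin, Fintype.card_coe]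
      omega
    have h3 : Module.finrank F ↥K ≤ S.card := by
      have := LinearMap.finrank_le_finrank_of_injective hρinj
      rwa [hcardS] at this
    omega
  obtain ⟨y, hy⟩ := hsurj x
  exact ⟨((y : ↥C) : Fin n → F), (y : ↥C).2, hKmem _ y.2, fun i => congrFun hy i⟩


lemma good_card (hC : ∀ c ∈ C, c ≠ 0 → d ≤ hammingNorm c)
    [DecidablePred (fun c : Fin n → F => c ∈ C)]
    {q k' : ℕ} (hq : Fintype.card F = q)
    (T : Finset (Fin n))
    (hk'pos : 1 ≤ k') (hk'w : k' ≤ T.card)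
    (hdT : T.card + 1 = d + k')
    (hdim : n + k' ≤ T.card + Module.finrank F ↥C)
    (hdq : d < q) :
    (q - d) * (q - 1) ^ (k' - 1) ≤
      (Finset.univ.filter fun c : Fin n → F =>
        c ∈ C ∧ ∀ i, i ∈ T ↔ c i ≠ 0).card := by
  classical
  obtain ⟨S, hST, hScard⟩ := Finset.exists_subset_card_eq hk'w
  have hSpos : S.Nonempty := by rw [← Finset.card_pos, hScard]; omega
  obtain ⟨s, hs⟩ := hSpos
  set S' := S.erase s with hS'
  have hS'card : S'.card = k' - 1 := by rw [hS', Finset.card_erase_of_mem hs, hScard]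
  have hS'S : S' ⊆ S := Finset.erase_subset s S
  have hS'T : S' ⊆ T := hS'S.trans hST
  have hsT : s ∈ T := hST hs
  have hsS' : s ∉ S' := Finset.notMem_erase s S
  set Ey : (↥S' → F) → Finset (Fin n → F) := fun y =>
    Finset.univ.filter (fun c => c ∈ C ∧ (∀ i, i ∉ T → c i = 0) ∧ ∀ i : ↥S', c ↑i = y i) with hEy
  have hEagree : ∀ (y : ↥S' → F) c c', c ∈ Ey y → c' ∈ Ey y → c s = c' s → c = c' := by
    intro y c c' hc hc' hss
    simp only [hEy, Finset.mem_filter] at hc hc'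
    apply agree_eq hC hST (show T.card < d + S.card by omega) hc.2.1 hc'.2.1 hc.2.2.1 hc'.2.2.1
    intro i hi
    by_cases his : i = s
    · subst his; exact hss
    · have hiS' : i ∈ S' := Finset.mem_erase.mpr ⟨his, hi⟩
      rw [hc.2.2.2 ⟨i, hiS'⟩, hc'.2.2.2 ⟨i, hiS'⟩]
  have hEexists : ∀ (y : ↥S' → F) (t : F), ∃ c ∈ Ey y, c s = t := by
    intro y t
    obtain ⟨c, hcC, hc0, hcx⟩ := exists_codeword hC hST (by omega) (by omega)
      (fun i => if h : (i : Fin n) = s then t else y ⟨i, Finset.mem_erase.mpr ⟨h, i.2⟩⟩)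
    refine ⟨c, ?_, ?_⟩
    · simp only [hEy, Finset.mem_filter]
      refine ⟨Finset.mem_univ _, hcC, hc0, ?_⟩
      intro i
      have hiS : (i : Fin n) ∈ S := hS'S i.2
      have hine : (i : Fin n) ≠ s := fun h => hsS' (h ▸ i.2)
      rw [hcx ⟨i, hiS⟩, dif_neg hine]
    · rw [hcx ⟨s, hs⟩, dif_pos rfl]
  have hEcard : ∀ y : ↥S' → F, (Ey y).card = q := by
    intro y
    have himg : (Ey y).image (fun c => c s) = Finset.univ := by
      apply Finset.eq_univ_of_forall
      intro t
      obtain ⟨c, hc, hct⟩ := hEexists y t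
      exact Finset.mem_image.mpr ⟨c, hc, hct⟩
    have hinj : Set.InjOn (fun c : Fin n → F => c s) (Ey y) := by
      intro c hc c' hc' h
      exact hEagree y c c' hc hc' h
    rw [← Finset.card_image_of_injOn hinj, himg, Finset.card_univ, hq]
  set Y : Finset (↥S' → F) :=
    Fintype.piFinset (fun _ => Finset.univ.filter (fun b : F => b ≠ 0)) with hY
  have hYcard : Y.card = (q - 1) ^ (k' - 1) := by
    rw [hY, Fintype.card_piFinset]
    have hone : (Finset.univ.filter (fun b : F => b ≠ 0)).card = q - 1 := by
      rw [Finset.filter_ne', Finset.card_erase_of_mem (Finset.mem_univ _), Finset.card_univ, hq]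
    simp only [hone]
    rw [Finset.prod_const, Finset.card_univ, Fintype.card_coe, hS'card]
  set fib : (↥S' → F) → Finset (Fin n → F) := fun y =>
    (Ey y).filter (fun c => ∀ i, i ∈ T ↔ c i ≠ 0) with hfib
  have hfibcard : ∀ y ∈ Y, q - d ≤ (fib y).card := by
    intro y hy
    have hynz : ∀ i, y i ≠ 0 := by
      intro i
      have := Fintype.mem_piFinset.mp hy i
      simpa using this
    set Bad : Finset (Fin n → F) :=
      (T \ S').biUnion (fun j => (Ey y).filter (fun c => c j = 0)) with hBad
    have hsub : Ey y \ Bad ⊆ fib y := by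
      intro c hc
      rw [Finset.mem_sdiff] at hc
      obtain ⟨hcE0, hcB⟩ := hc
      have hcE := hcE0
      simp only [hEy, Finset.mem_filter] at hcE
      rw [hfib, Finset.mem_filter]
      refine ⟨hcE0, ?_⟩
      intro i
      constructor
      · intro hiT hzero
        by_cases hiS' : i ∈ S'
        · exact hynz ⟨i, hiS'⟩ (by rw [← hcE.2.2.2 ⟨i, hiS'⟩]; exact hzero)
        · apply hcB
          rw [hBad, Finset.mem_biUnion]
          exact ⟨i, Finset.mem_sdiff.mpr ⟨hiT, hiS'⟩,
            Finset.mem_filter.mpr ⟨hcE0, hzero⟩⟩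
      · intro hne
        by_contra hiT
        exact hne (hcE.2.2.1 i hiT)
    have hBadcard : Bad.card ≤ d := by
      have h1 : Bad.card ≤ ∑ j ∈ T \ S', ((Ey y).filter (fun c => c j = 0)).card :=
        Finset.card_biUnion_le
      have h2 : ∀ j ∈ T \ S', ((Ey y).filter (fun c => c j = 0)).card ≤ 1 := by
        intro j hj
        rw [Finset.card_le_one]
        intro c hc c' hc'
        rw [Finset.mem_filter] at hc hc'
        have hjT := (Finset.mem_sdiff.mp hj).1
        have hjS' := (Finset.mem_sdiff.mp hj).2
        have hUT : insert j S' ⊆ T := by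
          intro i hi
          rcases Finset.mem_insert.mp hi with h | h
          · exact h ▸ hjT
          · exact hS'T h
        have hUcard : (insert j S').card = k' := by
          rw [Finset.card_insert_of_notMem hjS', hS'card]
          clear * - hk'pos
          omega
        have hcE := hc.1; have hc'E := hc'.1
        simp only [hEy, Finset.mem_filter] at hcE hc'E
        apply agree_eq hC hUT (show T.card < d + (insert j S').card by
          clear * - hUcard hdT hk'pos; omega)
          hcE.2.1 hc'E.2.1 hcE.2.2.1 hc'E.2.2.1
        intro i hi
        rcases Finset.mem_insert.mp hi with h | h
        · subst h; rw [hc.2, hc'.2]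
        · rw [hcE.2.2.2 ⟨i, h⟩, hc'E.2.2.2 ⟨i, h⟩]
      calc Bad.card ≤ ∑ j ∈ T \ S', ((Ey y).filter (fun c => c j = 0)).card := h1
        _ ≤ ∑ _j ∈ T \ S', 1 := Finset.sum_le_sum h2
        _ = (T \ S').card := by simp
        _ = d := by
            rw [Finset.card_sdiff_of_subset hS'T]
            clear * - hS'card hdT hk'pos
            omega
    have hfinal : (Ey y).card - Bad.card ≤ (Ey y \ Bad).card := Finset.le_card_sdiff Bad (Ey y)
    have hle := Finset.card_le_card hsub
    rw [hEcard y] at hfinal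
    omega
  have hdisj : ∀ y ∈ Y, ∀ y' ∈ Y, y ≠ y' → Disjoint (fib y) (fib y') := by
    intro y _ y' _ hne
    rw [Finset.disjoint_left]
    intro c hc hc'
    apply hne
    simp only [hfib, hEy, Finset.mem_filter] at hc hc'
    funext i
    rw [← hc.1.2.2.2 i, ← hc'.1.2.2.2 i]
  have hunion : Y.biUnion fib ⊆ Finset.univ.filter
      (fun c : Fin n → F => c ∈ C ∧ ∀ i, i ∈ T ↔ c i ≠ 0) := by
    intro c hc
    rw [Finset.mem_biUnion] at hc
    obtain ⟨y, hy, hc⟩ := hc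
    simp only [hfib, hEy, Finset.mem_filter] at hc
    exact Finset.mem_filter.mpr ⟨Finset.mem_univ _, hc.1.2.1, hc.2⟩
  calc (q - d) * (q - 1) ^ (k' - 1) = Y.card * (q - d) := by rw [hYcard]; ring
    _ ≤ ∑ y ∈ Y, (fib y).card := by
        have h := Finset.sum_le_sum hfibcard
        simpa [Finset.sum_const, smul_eq_mul] using h
    _ = (Y.biUnion fib).card := (Finset.card_biUnion hdisj).symm
    _ ≤ _ := Finset.card_le_card hunion

end aux

/-- The minimum distance (= minimum nonzero weight) of a linear code. -/
noncomputable def minDist {F : Type*} [Field F] [Fintype F] [DecidableEq F] {n : ℕ}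
    (C : Submodule F (Fin n → F)) : ℕ :=
  sInf {w | ∃ c ∈ C, c ≠ 0 ∧ hammingNorm c = w}

/-- Tolhuizen's bound: for an MDS code `[n, k, d]` over `GF(q)` with `d < q` and any
weight `w` with `d ≤ w ≤ n`, the number of codewords of weight `w` satisfies
`A_w ≥ C(n,w)(q-d)(q-1)^(w-d) > 0`. -/
theorem stmt_18 (q n k d : ℕ) (F : Type*) [Field F] [Fintype F] [DecidableEq F]
    (hcard : Fintype.card F = q)
    (C : Submodule F (Fin n → F)) (hk : Module.finrank F C = k)
    (hd : d = n - k + 1) (hmin : minDist C = d) (hdq : d < q)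
    (w : ℕ) (hw1 : d ≤ w) (hw2 : w ≤ n) :
    n.choose w * (q - d) * (q - 1) ^ (w - d)
        ≤ {c : Fin n → F | c ∈ C ∧ hammingNorm c = w}.ncard ∧
    0 < n.choose w * (q - d) * (q - 1) ^ (w - d) := by
  classical
  have hC : ∀ c ∈ C, c ≠ 0 → d ≤ hammingNorm c := by
    intro c hc hne
    rw [← hmin]
    exact Nat.sInf_le ⟨c, hc, hne, rfl⟩
  have hkn : k ≤ n := by
    have h := Submodule.finrank_le C
    rwa [hk, Module.finrank_fintype_fun_eq_card, Fintype.card_fin] at h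
  have hd1 : 1 ≤ d := by omega
  set k' := w - d + 1 with hk'
  constructor
  · set Big := Finset.univ.filter (fun c : Fin n → F => c ∈ C ∧ hammingNorm c = w) with hBig
    have hset : {c : Fin n → F | c ∈ C ∧ hammingNorm c = w} = ↑Big := by
      ext c; simp [hBig]
    rw [hset, Set.ncard_coe_finset]
    set G : Finset (Fin n) → Finset (Fin n → F) := fun T =>
      Finset.univ.filter (fun c => c ∈ C ∧ ∀ i, i ∈ T ↔ c i ≠ 0) with hG
    have hGsub : (Finset.powersetCard w (Finset.univ : Finset (Fin n))).biUnion G ⊆ Big := by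
      intro c hc
      rw [Finset.mem_biUnion] at hc
      obtain ⟨T, hT, hc⟩ := hc
      simp only [hG, Finset.mem_filter] at hc
      rw [hBig, Finset.mem_filter]
      refine ⟨Finset.mem_univ _, hc.2.1, ?_⟩
      have hTw : T.card = w := (Finset.mem_powersetCard.mp hT).2
      have hfe : Finset.univ.filter (fun i => c i ≠ 0) = T := by
        ext i
        simp only [Finset.mem_filter, Finset.mem_univ, true_and]
        exact (hc.2.2 i).symm
      unfold hammingNorm
      rw [hfe, hTw]
    have hGdisj : ∀ T ∈ Finset.powersetCard w (Finset.univ : Finset (Fin n)),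
        ∀ T' ∈ Finset.powersetCard w (Finset.univ : Finset (Fin n)),
        T ≠ T' → Disjoint (G T) (G T') := by
      intro T _ T' _ hne
      rw [Finset.disjoint_left]
      intro c hc hc'
      apply hne
      simp only [hG, Finset.mem_filter] at hc hc'
      ext i
      rw [hc.2.2 i, hc'.2.2 i]
    have hGcard : ∀ T ∈ Finset.powersetCard w (Finset.univ : Finset (Fin n)),
        (q - d) * (q - 1) ^ (w - d) ≤ (G T).card := by
      intro T hT
      have hTw : T.card = w := (Finset.mem_powersetCard.mp hT).2
      have hwd : w - d = k' - 1 := by omega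
      rw [hwd, hG]
      exact good_card hC hcard T (by omega) (by omega) (by omega)
        (by rw [hTw, hk]; omega) hdq
    calc n.choose w * (q - d) * (q - 1) ^ (w - d)
        = (Finset.powersetCard w (Finset.univ : Finset (Fin n))).card
            * ((q - d) * (q - 1) ^ (w - d)) := by
          rw [Finset.card_powersetCard, Finset.card_univ, Fintype.card_fin]; ring
      _ ≤ ∑ T ∈ Finset.powersetCard w (Finset.univ : Finset (Fin n)), (G T).card := by
          have h := Finset.sum_le_sum hGcard
          simpa [Finset.sum_const, smul_eq_mul] using h
      _ = ((Finset.powersetCard w (Finset.univ : Finset (Fin n))).biUnion G).card :=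
          (Finset.card_biUnion hGdisj).symm
      _ ≤ Big.card := Finset.card_le_card hGsub
  · have h1 : 0 < n.choose w := Nat.choose_pos hw2
    have h2 : 0 < q - d := by omega
    have h3 : 0 < (q - 1) ^ (w - d) := Nat.pow_pos (by omega)
    exact Nat.mul_pos (Nat.mul_pos h1 h2) h3
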